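/- For every real x with 0 < x ≤ ln(3/2) one has 4e^x − e^{2x} − x − 3 > 0 and x/(4e^x − e^{2x} − x − 3) ≤ ln(3/2)/(3/4 − ln(3/2)), with equality when x = ln(3/2); moreover ln(3/2)/(3/4 − ln(3/2)) ≤ 1.18. Consequently sup{ x/(4e^x − e^{2x} − x − 3) : 0 < x ≤ ln(3/2) } = ln(3/2)/(3/4 − ln(3/2)). -/

import Mathlib

open Real

lemma log_32_le : Real.log (3/2) ≤ 0.40567 := by
  have habs : |(1/3 : ℝ)| = 1/3 := abs_of_pos (by norm_num)
  have h := Real.abs_log_sub_add_sum_range_le (x := 1/3) (by rw [habs]; norm_num) 7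
  have hlog : Real.log (1 - 1/3 : ℝ) = - Real.log (3/2) := by
    rw [show (1 - 1/3 : ℝ) = (3/2)⁻¹ by norm_num, Real.log_inv]
  rw [hlog, habs] at h
  have h2 := (abs_le.1 h).1
  have hs : (∑ i ∈ Finset.range 7, (1/3:ℝ) ^ (i + 1) / (i + 1)) = 
      1/3 + 1/18 + 1/81 + 1/324 + 1/1215 + 1/4374 + 1/15309 := by
    simp [Finset.sum_range_succ]
    norm_num
  rw [hs] at h2
  norm_num at h2 ⊢
  linarith

theorem stmt_18 :
    (∀ x : ℝ, 0 < x → x ≤ Real.log (3 / 2) →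
      0 < 4 * Real.exp x - Real.exp (2 * x) - x - 3 ∧
      x / (4 * Real.exp x - Real.exp (2 * x) - x - 3) ≤
        Real.log (3 / 2) / (3 / 4 - Real.log (3 / 2))) ∧
    Real.log (3 / 2) /
        (4 * Real.exp (Real.log (3 / 2)) - Real.exp (2 * Real.log (3 / 2)) - Real.log (3 / 2) - 3)
      = Real.log (3 / 2) / (3 / 4 - Real.log (3 / 2)) ∧
    Real.log (3 / 2) / (3 / 4 - Real.log (3 / 2)) ≤ 1.18 ∧
    sSup {r : ℝ | ∃ x : ℝ, 0 < x ∧ x ≤ Real.log (3 / 2) ∧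
        r = x / (4 * Real.exp x - Real.exp (2 * x) - x - 3)} =
      Real.log (3 / 2) / (3 / 4 - Real.log (3 / 2)) := by
  set L : ℝ := Real.log (3/2) with hLdef
  have hL0 : 0 < L := Real.log_pos (by norm_num)
  have hLhalf : L ≤ 1/2 := by
    have := Real.log_le_sub_one_of_pos (show (0:ℝ) < 3/2 by norm_num)
    linarith
  have hden : 0 < 3/4 - L := by linarith
  have hexpL : Real.exp L = 3/2 := Real.exp_log (by norm_num)
  have hexp2L : Real.exp (2*L) = 9/4 := by
    rw [two_mul, Real.exp_add, hexpL]; norm_num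
  -- concavity of g
  set g : ℝ → ℝ := fun y => 4*L*Real.exp y - L*Real.exp (2*y) - 3*L - 3/4*y with hgdef
  have hd2exp : ∀ x : ℝ, HasDerivAt (fun y : ℝ => Real.exp (2*y)) (Real.exp (2*x) * 2) x := by
    intro x
    have hid : HasDerivAt (fun y : ℝ => 2*y) 2 x := by
      simpa using (hasDerivAt_id x).const_mul (2:ℝ)
    exact hid.exp
  have hd1 : ∀ x : ℝ, HasDerivAt g (4*L*Real.exp x - 2*L*Real.exp (2*x) - 3/4) x := by
    intro x
    have h1 := (Real.hasDerivAt_exp x).const_mul (4*L)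
    have h2 := (hd2exp x).const_mul L
    have h3 := (hasDerivAt_id x).const_mul (3/4 : ℝ)
    have := ((h1.sub h2).sub (hasDerivAt_const x (3*L))).sub h3
    exact this.congr_deriv (by ring)
  have hd2 : ∀ x : ℝ, HasDerivAt (fun y => 4*L*Real.exp y - 2*L*Real.exp (2*y) - 3/4)
      (4*L*Real.exp x - 4*L*Real.exp (2*x)) x := by
    intro x
    have h1 := (Real.hasDerivAt_exp x).const_mul (4*L)
    have h2 := (hd2exp x).const_mul (2*L)
    have := (h1.sub h2).sub (hasDerivAt_const x (3/4 : ℝ))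
    exact this.congr_deriv (by ring)
  have hconc : ConcaveOn ℝ (Set.Icc 0 L) g := by
    apply concaveOn_of_hasDerivWithinAt2_nonpos (convex_Icc 0 L)
      (f' := fun y => 4*L*Real.exp y - 2*L*Real.exp (2*y) - 3/4)
      (f'' := fun y => 4*L*Real.exp y - 4*L*Real.exp (2*y))
    · exact (Continuous.continuousOn (by continuity))
    · exact fun x _ => (hd1 x).hasDerivWithinAt
    · exact fun x _ => (hd2 x).hasDerivWithinAt
    · intro x hx
      rw [interior_Icc] at hx
      have hx0 : 0 < x := hx.1
      have : Real.exp x ≤ Real.exp (2*x) := Real.exp_le_exp.2 (by linarith)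
      have h4L : (0:ℝ) ≤ 4*L := by linarith
      nlinarith
  have hg0 : g 0 = 0 := by simp [hgdef, Real.exp_zero]; ring
  have hgL : g L = 0 := by simp only [hgdef]; rw [hexpL, hexp2L]; ring
  have hgnonneg : ∀ x : ℝ, 0 < x → x ≤ L → 0 ≤ g x := by
    intro x hx hxL
    have ha : (0:ℝ) ≤ 1 - x/L := by
      rw [sub_nonneg]
      exact div_le_one_of_le₀ hxL hL0.le
    have hb : (0:ℝ) ≤ x/L := div_nonneg hx.le hL0.le
    have hsum : (1 - x/L) + x/L = 1 := by ring
    have := hconc.2 (Set.left_mem_Icc.2 hL0.le) (Set.right_mem_Icc.2 hL0.le) ha hb hsum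
    rw [smul_eq_mul, smul_eq_mul, smul_eq_mul, smul_eq_mul, hg0, hgL] at this
    have hxx : (1 - x/L) * 0 + x/L * L = x := by field_simp; ring
    rw [hxx] at this
    simpa using this
  -- main pointwise claim
  have hmain : ∀ x : ℝ, 0 < x → x ≤ L →
      0 < 4 * Real.exp x - Real.exp (2 * x) - x - 3 ∧
      x / (4 * Real.exp x - Real.exp (2 * x) - x - 3) ≤ L / (3/4 - L) := by
    intro x hx hxL
    have ht1 : (1:ℝ) < Real.exp x := by
      have := Real.exp_lt_exp.2 hx
      rwa [Real.exp_zero] at this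
    have ht2 : Real.exp x ≤ 3/2 := by
      have := Real.exp_le_exp.2 hxL
      rwa [hexpL] at this
    have hln : x + 1 ≤ Real.exp x := Real.add_one_le_exp x
    have hsq : Real.exp (2*x) = Real.exp x * Real.exp x := by
      rw [two_mul, Real.exp_add]
    have hfpos : 0 < 4 * Real.exp x - Real.exp (2 * x) - x - 3 := by
      rw [hsq]
      nlinarith [mul_pos (sub_pos.2 ht1) (show (0:ℝ) < 2 - Real.exp x by linarith)]
    refine ⟨hfpos, ?_⟩
    rw [div_le_div_iff₀ hfpos hden]
    have hgx := hgnonneg x hx hxL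
    simp only [hgdef] at hgx
    nlinarith
  refine ⟨hmain, ?_, ?_, ?_⟩
  · rw [hexpL, hexp2L]
    congr 1
    ring
  · rw [div_le_iff₀ hden]
    have := log_32_le
    norm_num at this ⊢
    nlinarith
  · apply IsGreatest.csSup_eq
    constructor
    · exact ⟨L, hL0, le_refl L, by rw [hexpL, hexp2L]; congr 1; ring⟩
    · rintro r ⟨x, hx, hxL, rfl⟩
      exact (hmain x hx hxL).2
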